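/- Let F be a field of characteristic p > 0 (p prime) and let V be a module over the universal enveloping algebra U(sl₂(F)) that is generated (as a U(sl₂(F))-module) by a vector v satisfying e·v = 0 and h·v = −v. Then the central element w = (h+1)² + 4fe acts as zero on all of V, i.e., w·u = 0 for every u ∈ V. -/

import Mathlib

open LieAlgebra.SpecialLinear UniversalEnvelopingAlgebra

noncomputable section

/-- `e = E₁₂` in `sl₂(F)`. -/
def sl2E (F : Type*) [Field F] : sl (Fin 2) F := LieAlgebra.SpecialLinear.single (0 : Fin 2) 1 (by decide) (1 : F)

/-- `f = E₂₁` in `sl₂(F)`. -/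
def sl2F (F : Type*) [Field F] : sl (Fin 2) F := LieAlgebra.SpecialLinear.single (1 : Fin 2) 0 (by decide) (1 : F)

/-- `h = E₁₁ - E₂₂` in `sl₂(F)`. -/
def sl2H (F : Type*) [Field F] : sl (Fin 2) F :=
  ⟨Matrix.single 0 0 (1 : F) - Matrix.single 1 1 (1 : F), by
    change _ ∈ LinearMap.ker (Matrix.traceLinearMap (Fin 2) F F)
    rw [LinearMap.mem_ker, Matrix.traceLinearMap_apply]
    simp [Matrix.trace, Matrix.diag, Matrix.single, Fin.sum_univ_two]⟩

section AuxRing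
variable {A : Type*} [Ring A] (e f h : A)

theorem sl2_aux_commE (r1 : h*e - e*h - 2*e = 0) (r3 : e*f - f*e - h = 0) :
    Commute ((h+1)^2 + 4*f*e) e := by
  have key : ((h+1)^2 + 4*f*e) * e - e * ((h+1)^2 + 4*f*e)
      = h*(h*e - e*h - 2*e) + (h*e - e*h - 2*e)*h - 4*((e*f - f*e - h)*e) := by
    noncomm_ring
  have : ((h+1)^2 + 4*f*e) * e - e * ((h+1)^2 + 4*f*e) = 0 := by
    rw [key, r1, r3]; simp
  exact sub_eq_zero.mp this

theorem sl2_aux_commF (r2 : h*f - f*h + 2*f = 0) (r3 : e*f - f*e - h = 0) :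
    Commute ((h+1)^2 + 4*f*e) f := by
  have key : ((h+1)^2 + 4*f*e) * f - f * ((h+1)^2 + 4*f*e)
      = h*(h*f - f*h + 2*f) + (h*f - f*h + 2*f)*h + 4*(f*(e*f - f*e - h)) := by
    noncomm_ring
  have : ((h+1)^2 + 4*f*e) * f - f * ((h+1)^2 + 4*f*e) = 0 := by
    rw [key, r2, r3]; simp
  exact sub_eq_zero.mp this

theorem sl2_aux_commH (r1 : h*e - e*h - 2*e = 0) (r2 : h*f - f*h + 2*f = 0) :
    Commute ((h+1)^2 + 4*f*e) h := by
  have key : ((h+1)^2 + 4*f*e) * h - h * ((h+1)^2 + 4*f*e)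
      = -4*((h*f - f*h + 2*f)*e) - 4*(f*(h*e - e*h - 2*e)) := by
    noncomm_ring
  have : ((h+1)^2 + 4*f*e) * h - h * ((h+1)^2 + 4*f*e) = 0 := by
    rw [key, r1, r2]; simp
  exact sub_eq_zero.mp this
end AuxRing

section Brackets
variable (F : Type*) [Field F]

set_option maxHeartbeats 1600000

theorem sl2_bracket_HE : ⁅sl2H F, sl2E F⁆ = (2:F) • sl2E F := by
  apply Subtype.ext
  show (sl2H F).val * (sl2E F).val - (sl2E F).val * (sl2H F).val = (2:F) • (sl2E F).val
  ext i j
  fin_cases i <;> fin_cases j <;>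
    simp [sl2E, sl2H, Matrix.mul_apply, LieAlgebra.SpecialLinear.val_single, Matrix.single, Fin.sum_univ_two] <;> ring

theorem sl2_bracket_HF : ⁅sl2H F, sl2F F⁆ = (-2:F) • sl2F F := by
  apply Subtype.ext
  show (sl2H F).val * (sl2F F).val - (sl2F F).val * (sl2H F).val = (-2:F) • (sl2F F).val
  ext i j
  fin_cases i <;> fin_cases j <;>
    simp [sl2F, sl2H, Matrix.mul_apply, LieAlgebra.SpecialLinear.val_single, Matrix.single, Fin.sum_univ_two] <;> ring

theorem sl2_bracket_EF : ⁅sl2E F, sl2F F⁆ = sl2H F := by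
  apply Subtype.ext
  show (sl2E F).val * (sl2F F).val - (sl2F F).val * (sl2E F).val = _
  ext i j
  fin_cases i <;> fin_cases j <;>
    simp [sl2E, sl2F, sl2H, Matrix.mul_apply, LieAlgebra.SpecialLinear.val_single, Matrix.single, Fin.sum_univ_two]

theorem sl2_decomp (x : sl (Fin 2) F) :
    x = x.val 0 1 • sl2E F + x.val 1 0 • sl2F F + x.val 0 0 • sl2H F := by
  have htr : Matrix.trace x.val = 0 := x.2
  rw [Matrix.trace_fin_two] at htr
  apply Subtype.ext
  show x.val = x.val 0 1 • (sl2E F).val + x.val 1 0 • (sl2F F).val + x.val 0 0 • (sl2H F).val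
  ext i j
  fin_cases i <;> fin_cases j <;>
    simp [sl2E, sl2F, sl2H, LieAlgebra.SpecialLinear.val_single, Matrix.single] <;> linear_combination htr
end Brackets

set_option maxHeartbeats 1600000 in
/-- If a `U(sl₂(F))`-module `V` (over a field of prime characteristic `p`) is generated by
a maximal vector `v` of weight `−1` (that is, `e·v = 0` and `h·v = −v`), then the central
element `w = (h+1)² + 4fe` acts as zero on all of `V`. -/
theorem casimir_acts_as_zero (F : Type*) [Field F] (p : ℕ) (hp : p.Prime) [CharP F p]
    (V : Type*) [AddCommGroup V]
    [Module (UniversalEnvelopingAlgebra F (sl (Fin 2) F)) V]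
    (v : V)
    (hgen : Submodule.span (UniversalEnvelopingAlgebra F (sl (Fin 2) F)) {v} = ⊤)
    (he : (ι F (sl2E F)) • v = 0)
    (hh : (ι F (sl2H F)) • v = -v) :
    ∀ u : V, ((ι F (sl2H F) + 1) ^ 2 + 4 * ι F (sl2F F) * ι F (sl2E F)) • u = 0 := by
  have smul2 : ∀ a : UniversalEnvelopingAlgebra F (sl (Fin 2) F), (2:F) • a = 2 * a := by
    intro a
    rw [Algebra.smul_def, map_ofNat]
  letI : LieRing (UniversalEnvelopingAlgebra F (sl (Fin 2) F)) := LieRing.ofAssociativeRing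
  have r1 : ι F (sl2H F) * ι F (sl2E F) - ι F (sl2E F) * ι F (sl2H F) - 2 * ι F (sl2E F) = 0 := by
    have h0 := (ι F : sl (Fin 2) F →ₗ⁅F⁆ UniversalEnvelopingAlgebra F (sl (Fin 2) F)).map_lie
      (sl2H F) (sl2E F)
    rw [sl2_bracket_HE, Ring.lie_def, map_smul, smul2] at h0
    rw [← h0]
    abel
  have r2 : ι F (sl2H F) * ι F (sl2F F) - ι F (sl2F F) * ι F (sl2H F) + 2 * ι F (sl2F F) = 0 := by
    have h0 := (ι F : sl (Fin 2) F →ₗ⁅F⁆ UniversalEnvelopingAlgebra F (sl (Fin 2) F)).map_lie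
      (sl2H F) (sl2F F)
    rw [sl2_bracket_HF, Ring.lie_def, map_smul, neg_smul, smul2] at h0
    rw [← h0]
    abel
  have r3 : ι F (sl2E F) * ι F (sl2F F) - ι F (sl2F F) * ι F (sl2E F) - ι F (sl2H F) = 0 := by
    have h0 := (ι F : sl (Fin 2) F →ₗ⁅F⁆ UniversalEnvelopingAlgebra F (sl (Fin 2) F)).map_lie
      (sl2E F) (sl2F F)
    rw [sl2_bracket_EF, Ring.lie_def] at h0
    rw [h0]
    abel
  have commE : Commute ((ι F (sl2H F) + 1) ^ 2 + 4 * ι F (sl2F F) * ι F (sl2E F))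
      (ι F (sl2E F)) := by
    exact sl2_aux_commE _ _ _ r1 r3
  have commF : Commute ((ι F (sl2H F) + 1) ^ 2 + 4 * ι F (sl2F F) * ι F (sl2E F))
      (ι F (sl2F F)) := by
    exact sl2_aux_commF _ _ _ r2 r3
  have commH : Commute ((ι F (sl2H F) + 1) ^ 2 + 4 * ι F (sl2F F) * ι F (sl2E F))
      (ι F (sl2H F)) := by
    exact sl2_aux_commH _ _ _ r1 r2
  have central : ∀ x : UniversalEnvelopingAlgebra F (sl (Fin 2) F),
      Commute ((ι F (sl2H F) + 1) ^ 2 + 4 * ι F (sl2F F) * ι F (sl2E F)) x := by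
    intro x
    obtain ⟨y, rfl⟩ := RingCon.mkₐ_surjective (α := F)
      (UniversalEnvelopingAlgebra.ringCon F (sl (Fin 2) F)) x
    induction y using TensorAlgebra.induction with
    | algebraMap r =>
        rw [AlgHom.commutes]
        exact (Algebra.commutes (A := UniversalEnvelopingAlgebra F (sl (Fin 2) F)) r _).symm
    | ι x =>
        have hx : RingCon.mkₐ F (UniversalEnvelopingAlgebra.ringCon F (sl (Fin 2) F))
            (TensorAlgebra.ι F x) = ι F x := rfl
        rw [hx, sl2_decomp F x, map_add, map_add, map_smul,
          map_smul, map_smul]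
        exact ((commE.smul_right _).add_right (commF.smul_right _)).add_right
          (commH.smul_right _)
    | mul a b ha hb => rw [map_mul]; exact ha.mul_right hb
    | add a b ha hb => rw [map_add]; exact ha.add_right hb
  have hv1 : (ι F (sl2H F) + 1) • v = 0 := by
    rw [add_smul, one_smul, hh]
    abel
  have hwv : ((ι F (sl2H F) + 1) ^ 2 + 4 * ι F (sl2F F) * ι F (sl2E F)) • v = 0 := by
    rw [add_smul, sq, mul_smul, hv1, smul_zero, mul_assoc, mul_smul, mul_smul, he,
      smul_zero, smul_zero, add_zero]
  intro u
  have hu : u ∈ Submodule.span (UniversalEnvelopingAlgebra F (sl (Fin 2) F)) ({v} : Set V) := by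
    rw [hgen]; trivial
  obtain ⟨a, rfl⟩ := Submodule.mem_span_singleton.mp hu
  rw [← mul_smul, (central a).eq, mul_smul, hwv, smul_zero]

end
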